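/- For every IMAB instance I = (f_1, …, f_k) and all N, T ∈ ℕ with T ≥ 4 and T/2 ≤ N ≤ T, the offline optima satisfy 5·OPT(I,N) ≥ OPT(I,T). -/

import Mathlib

open scoped Classical

/-- A reward function: bounded in [0,1], nondecreasing, with decreasing marginal returns. -/
def IsRewardFn (f : ℕ → ℝ) : Prop :=
  (∀ n, 0 ≤ f n) ∧ (∀ n, f n ≤ 1) ∧ Monotone f ∧
    ∀ n, 1 ≤ n → f (n + 1) - f n ≤ f n - f (n - 1)

/-- Cumulative reward from pulling an arm with reward function `f` for `N` pulls. -/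
noncomputable def Rew (f : ℕ → ℝ) (N : ℕ) : ℝ := ∑ n ∈ Finset.Icc 1 N, f n

/-- Offline optimum: the best total reward over all allocations of `T` pulls to the `k` arms. -/
noncomputable def OPT {k : ℕ} (f : Fin k → ℕ → ℝ) (T : ℕ) : ℝ :=
  sSup {x : ℝ | ∃ M : Fin k → ℕ, (∑ i, M i) = T ∧ x = ∑ i, Rew (f i) (M i)}

section Aux

variable {f : ℕ → ℝ}

lemma rew_nonneg (hf : IsRewardFn f) (n : ℕ) : 0 ≤ Rew f n :=
  Finset.sum_nonneg fun i _ => hf.1 i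

lemma rew_zero (f : ℕ → ℝ) : Rew f 0 = 0 := by
  simp [Rew]

lemma rew_le_card (hf : IsRewardFn f) (n : ℕ) : Rew f n ≤ n := by
  have := Finset.sum_le_card_nsmul (Finset.Icc 1 n) f 1 (fun i _ => hf.2.1 i)
  simpa [Rew, Nat.card_Icc, nsmul_eq_mul] using this

lemma rew_mono (hf : IsRewardFn f) : Monotone (Rew f) := fun a b h =>
  Finset.sum_le_sum_of_subset_of_nonneg (Finset.Icc_subset_Icc_right h)
    (fun i _ _ => hf.1 i)

lemma d_antitone (hf : IsRewardFn f) (b j : ℕ) :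
    f (b + 1 + j) - f (b + j) ≤ f (b + 1) - f b := by
  induction j with
  | zero => simp
  | succ j ih =>
    have h := hf.2.2.2 (b + 1 + j) (by omega)
    have e0 : b + 1 + j - 1 = b + j := by omega
    rw [e0] at h
    have e1 : b + 1 + (j + 1) = b + 1 + j + 1 := by omega
    have e2 : b + (j + 1) = b + 1 + j := by omega
    rw [e1, e2]
    linarith

lemma f_shift (hf : IsRewardFn f) (a b : ℕ) : f (a + b) - f a ≤ f b - f 0 := by
  induction b with
  | zero => simp
  | succ b ih =>
    have h := d_antitone hf b a
    have e : b + 1 + a = a + (b + 1) := by omega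
    have e2 : b + a = a + b := by omega
    rw [e, e2] at h
    linarith

lemma rew_range (f : ℕ → ℝ) (N : ℕ) : Rew f N = ∑ i ∈ Finset.range N, f (i + 1) := by
  rw [Rew, ← Finset.Ico_add_one_right_eq_Icc, Finset.sum_Ico_eq_sum_range]
  simp [Nat.add_comm]

lemma nfn_le (hf : IsRewardFn f) (N : ℕ) : (N : ℝ) * f N ≤ 2 * Rew f N := by
  have key : ∀ i ∈ Finset.range N, f N ≤ f (i + 1) + f (N - 1 - i) := by
    intro i hi
    have hiN : i < N := Finset.mem_range.mp hi
    have h := f_shift hf (N - 1 - i) (i + 1)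
    have e : N - 1 - i + (i + 1) = N := by omega
    rw [e] at h
    have h0 : 0 ≤ f 0 := hf.1 0
    linarith
  have h1 : (N : ℝ) * f N ≤ ∑ i ∈ Finset.range N, (f (i + 1) + f (N - 1 - i)) := by
    have := Finset.card_nsmul_le_sum (Finset.range N)
      (fun i => f (i + 1) + f (N - 1 - i)) (f N) key
    simpa [nsmul_eq_mul] using this
  rw [Finset.sum_add_distrib] at h1
  have h2 : ∑ i ∈ Finset.range N, f (N - 1 - i) = ∑ i ∈ Finset.range N, f i :=
    Finset.sum_range_reflect f N
  have h3 : ∑ i ∈ Finset.range N, f i ≤ ∑ i ∈ Finset.range N, f (i + 1) :=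
    Finset.sum_le_sum fun i _ => hf.2.2.1 (Nat.le_succ i)
  rw [rew_range]
  linarith

lemma icc_eq_ioc (n : ℕ) : Finset.Icc 1 n = Finset.Ioc 0 n := by
  ext x; simp [Nat.lt_iff_add_one_le]

lemma rew_split (f : ℕ → ℝ) {m M : ℕ} (h : m ≤ M) :
    Rew f M = Rew f m + ∑ n ∈ Finset.Ioc m M, f n := by
  rw [Rew, Rew, icc_eq_ioc, icc_eq_ioc,
    ← Finset.sum_Ioc_consecutive f (Nat.zero_le m) h]

lemma rew_convex (hf : IsRewardFn f) {m M : ℕ} (h : m ≤ M) :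
    (M : ℝ) * Rew f m ≤ (m : ℝ) * Rew f M := by
  have hsplit := rew_split f h
  have hA : Rew f m ≤ (m : ℝ) * f m := by
    have := Finset.sum_le_card_nsmul (Finset.Icc 1 m) f (f m)
      (fun i hi => hf.2.2.1 (Finset.mem_Icc.mp hi).2)
    simpa [Rew, Nat.card_Icc, nsmul_eq_mul] using this
  have hB : ((M - m : ℕ) : ℝ) * f m ≤ ∑ n ∈ Finset.Ioc m M, f n := by
    have := Finset.card_nsmul_le_sum (Finset.Ioc m M) f (f m)
      (fun i hi => hf.2.2.1 (le_of_lt (Finset.mem_Ioc.mp hi).1))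
    simpa [Nat.card_Ioc, nsmul_eq_mul] using this
  have hcast : ((M - m : ℕ) : ℝ) = (M : ℝ) - (m : ℝ) := Nat.cast_sub h
  rw [hcast] at hB
  have hm : (0 : ℝ) ≤ m := Nat.cast_nonneg m
  have hMm : (m : ℝ) ≤ M := Nat.cast_le.mpr h
  nlinarith [mul_le_mul_of_nonneg_left hA (sub_nonneg.mpr hMm),
    mul_le_mul_of_nonneg_left hB hm]

lemma rew_double (hf : IsRewardFn f) (N : ℕ) : Rew f (2 * N) ≤ 5 * Rew f N := by
  have hsplit := rew_split f (show N ≤ 2 * N by omega)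
  have hB : ∑ n ∈ Finset.Ioc N (2 * N), f n ≤ ((2 * N - N : ℕ) : ℝ) * f (2 * N) := by
    have := Finset.sum_le_card_nsmul (Finset.Ioc N (2 * N)) f (f (2 * N))
      (fun i hi => hf.2.2.1 (Finset.mem_Ioc.mp hi).2)
    simpa [Nat.card_Ioc, nsmul_eq_mul] using this
  have hcast : ((2 * N - N : ℕ) : ℝ) = (N : ℝ) := by
    norm_cast; omega
  rw [hcast] at hB
  have h2f : f (2 * N) ≤ 2 * f N := by
    have h := f_shift hf N N
    have e : N + N = 2 * N := by omega
    rw [e] at h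
    have h0 : 0 ≤ f 0 := hf.1 0
    linarith
  have hnfn := nfn_le hf N
  have hfN : 0 ≤ f (2 * N) := hf.1 _
  have hN0 : (0:ℝ) ≤ N := Nat.cast_nonneg N
  nlinarith [mul_le_mul_of_nonneg_left h2f hN0]

end Aux

lemma opt_bdd {k : ℕ} (f : Fin k → ℕ → ℝ) (hf : ∀ i, IsRewardFn (f i)) (T : ℕ) :
    ∀ x ∈ {x : ℝ | ∃ M : Fin k → ℕ, (∑ i, M i) = T ∧ x = ∑ i, Rew (f i) (M i)},
      x ≤ (T : ℝ) := by
  rintro x ⟨M, hM, rfl⟩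
  calc ∑ i, Rew (f i) (M i) ≤ ∑ i, (M i : ℝ) :=
        Finset.sum_le_sum fun i _ => rew_le_card (hf i) (M i)
    _ = (T : ℝ) := by rw [← hM]; push_cast; ring

lemma rew_le_opt {k : ℕ} (f : Fin k → ℕ → ℝ) (hf : ∀ i, IsRewardFn (f i)) (N : ℕ)
    (i : Fin k) : Rew (f i) N ≤ OPT f N := by
  apply le_csSup
  · exact ⟨N, fun x hx => opt_bdd f hf N x hx⟩
  · refine ⟨fun j => if j = i then N else 0, ?_, ?_⟩
    · simp
    · rw [Finset.sum_eq_single i]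
      · simp
      · intro j _ hj
        simp [hj, rew_zero]
      · intro h; exact absurd (Finset.mem_univ i) h

theorem opt_ratio_half (k : ℕ) (hk : 0 < k) (f : Fin k → ℕ → ℝ)
    (hf : ∀ i, IsRewardFn (f i)) (N T : ℕ)
    (hT : 4 ≤ T) (hNlow : T ≤ 2 * N) (hNhigh : N ≤ T) :
    OPT f T ≤ 5 * OPT f N := by
  have i0 : Fin k := ⟨0, hk⟩
  have hOPTN : 0 ≤ OPT f N :=
    le_trans (rew_nonneg (hf i0) N) (rew_le_opt f hf N i0)
  apply Real.sSup_le
  · rintro x ⟨M, hM, rfl⟩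
    have hT0 : (0 : ℝ) < T := by
      have : 0 < T := by omega
      exact_mod_cast this
    have hMiT : ∀ i : Fin k, M i ≤ T := by
      intro i
      rw [← hM]
      exact Finset.single_le_sum (fun j _ => Nat.zero_le _) (Finset.mem_univ i)
    have hRi : ∀ i : Fin k, Rew (f i) T ≤ 5 * OPT f N := by
      intro i
      calc Rew (f i) T ≤ Rew (f i) (2 * N) := rew_mono (hf i) hNlow
        _ ≤ 5 * Rew (f i) N := rew_double (hf i) N
        _ ≤ 5 * OPT f N := by linarith [rew_le_opt f hf N i]
    rw [← mul_le_mul_iff_right₀ hT0]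
    calc (T : ℝ) * ∑ i, Rew (f i) (M i)
        = ∑ i, (T : ℝ) * Rew (f i) (M i) := Finset.mul_sum _ _ _
      _ ≤ ∑ i, (M i : ℝ) * Rew (f i) T :=
          Finset.sum_le_sum fun i _ => rew_convex (hf i) (hMiT i)
      _ ≤ ∑ i, (M i : ℝ) * (5 * OPT f N) :=
          Finset.sum_le_sum fun i _ =>
            mul_le_mul_of_nonneg_left (hRi i) (Nat.cast_nonneg _)
      _ = (T : ℝ) * (5 * OPT f N) := by
          rw [← Finset.sum_mul]
          congr 1
          rw [← hM]; push_cast; ring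
  · linarith
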